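/- Let F be a field of characteristic 2 with more than 2 elements, and let S be a 3-dimensional linear subspace of Mat_2(F) such that every element of S has at most one nonzero eigenvalue in F. Then S = sl_2(F). -/

import Mathlib

open Polynomial Matrix

private lemma root_char2 {F : Type*} [Field F] (M : Matrix (Fin 2) (Fin 2) F) (x : F)
    (h : (x - M 0 0) * (x - M 1 1) - M 0 1 * M 1 0 = 0) : M.charpoly.IsRoot x := by
  have hcp : M.charpoly = (X - C (M 0 0)) * (X - C (M 1 1)) - C (M 0 1) * C (M 1 0) := by
    rw [Matrix.charpoly, Matrix.det_fin_two, charmatrix_apply_eq, charmatrix_apply_eq,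
      charmatrix_apply_ne _ _ _ (by decide), charmatrix_apply_ne _ _ _ (by decide)]
    ring
  simp [hcp, Polynomial.IsRoot, h]

private lemma key2 {F : Type*} [Field F] {S : Submodule F (Matrix (Fin 2) (Fin 2) F)}
    (hS : ∀ M ∈ S, {a : F | a ≠ 0 ∧ M.charpoly.IsRoot a}.Subsingleton)
    (p q r s : F) (hM : (!![p, q; r, s] : Matrix (Fin 2) (Fin 2) F) ∈ S) {α β : F}
    (hα : α ≠ 0) (hβ : β ≠ 0) (hαβ : α ≠ β)
    (h1 : (α - p) * (α - s) - q * r = 0)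
    (h2 : (β - p) * (β - s) - q * r = 0) : False := by
  have r1 : (!![p, q; r, s] : Matrix (Fin 2) (Fin 2) F).charpoly.IsRoot α :=
    root_char2 _ _ (by simpa using h1)
  have r2 : (!![p, q; r, s] : Matrix (Fin 2) (Fin 2) F).charpoly.IsRoot β :=
    root_char2 _ _ (by simpa using h2)
  exact hαβ (hS _ hM ⟨hα, r1⟩ ⟨hβ, r2⟩)

theorem stmt4 {F : Type*} [Field F] (hchar : ringChar F = 2) (hF : 2 < Cardinal.mk F)
    (S : Submodule F (Matrix (Fin 2) (Fin 2) F))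
    (hdim : Module.finrank F S = 3)
    (hS : ∀ M ∈ S, {a : F | a ≠ 0 ∧ M.charpoly.IsRoot a}.Subsingleton) :
    S = LinearMap.ker (Matrix.traceLinearMap (Fin 2) F F) := by
  classical
  have htwo : (2 : F) = 0 := by
    have : CharP F 2 := hchar ▸ ringChar.charP F
    exact CharP.cast_eq_zero F 2
  have hneg : ∀ x : F, -x = x := fun x => by
    rw [neg_eq_iff_add_eq_zero]; linear_combination x * htwo
  -- get u ∉ {0, 1}
  obtain ⟨u, hu0, hu1⟩ : ∃ u : F, u ≠ 0 ∧ u ≠ 1 := by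
    by_contra h
    push_neg at h
    have hle : Cardinal.mk F ≤ 2 := by
      calc Cardinal.mk F = Cardinal.mk (Set.univ : Set F) := Cardinal.mk_univ.symm
      _ ≤ Cardinal.mk ({0, 1} : Set F) := Cardinal.mk_le_mk_of_subset (by
            intro x _
            rcases em (x = 0) with h0 | h0
            · exact Or.inl h0
            · exact Or.inr (h x h0))
      _ ≤ Cardinal.mk ({1} : Set F) + 1 := Cardinal.mk_insert_le
      _ ≤ 2 := by rw [Cardinal.mk_singleton]; norm_num
    exact absurd hF (not_lt.mpr hle)
  -- construct the linear functional cutting out S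
  have hfr4 : Module.finrank F (Matrix (Fin 2) (Fin 2) F) = 4 := by
    simp [Module.finrank_matrix]
  have hq1 : Module.finrank F (Matrix (Fin 2) (Fin 2) F ⧸ S) = 1 := by
    have := Submodule.finrank_quotient_add_finrank S
    omega
  let e : (Matrix (Fin 2) (Fin 2) F ⧸ S) ≃ₗ[F] F :=
    LinearEquiv.ofFinrankEq _ _ (by rw [hq1, Module.finrank_self])
  set f : Matrix (Fin 2) (Fin 2) F →ₗ[F] F := e.toLinearMap ∘ₗ S.mkQ with hfdef
  have hmem : ∀ M, M ∈ S ↔ f M = 0 := by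
    intro M
    rw [hfdef, LinearMap.comp_apply, LinearEquiv.coe_coe, LinearEquiv.map_eq_zero_iff,
      Submodule.mkQ_apply, Submodule.Quotient.mk_eq_zero]
  set a := f (single 0 0 1) with hadef
  set b := f (single 0 1 1) with hbdef
  set c := f (single 1 0 1) with hcdef
  set d := f (single 1 1 1) with hddef
  have hrep : ∀ p q r s : F, (!![p, q; r, s] : Matrix (Fin 2) (Fin 2) F) =
      p • single 0 0 1 + q • single 0 1 1
        + r • single 1 0 1 + s • single 1 1 1 := by
    intro p q r s
    ext i j
    rw [Matrix.add_apply, Matrix.add_apply, Matrix.add_apply, Matrix.smul_apply,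
      Matrix.smul_apply, Matrix.smul_apply, Matrix.smul_apply]
    fin_cases i <;> fin_cases j <;> simp [single]
  have hfval : ∀ p q r s : F, f !![p, q; r, s] = p * a + q * b + r * c + s * d := by
    intro p q r s
    rw [hrep p q r s]
    simp only [map_add, _root_.map_smul, smul_eq_mul, hadef, hbdef, hcdef, hddef]
  have hfM : ∀ M : Matrix (Fin 2) (Fin 2) F,
      f M = M 0 0 * a + M 0 1 * b + M 1 0 * c + M 1 1 * d := by
    intro M
    conv_lhs => rw [Matrix.eta_fin_two M]
    rw [hfval]
  -- case analysis
  by_cases hb : b = 0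
  · by_cases hc : c = 0
    · by_cases had : a = d
      · -- f is a multiple of trace
        have ha0 : a ≠ 0 := by
          intro ha
          have hStop : S = ⊤ := by
            rw [eq_top_iff]
            intro M _
            rw [hmem, hfM, hb, hc, ha, ← had, ha]
            ring
          rw [hStop, finrank_top, hfr4] at hdim
          omega
        ext M
        rw [hmem, LinearMap.mem_ker, Matrix.traceLinearMap_apply, hfM, hb, hc, ← had,
          Matrix.trace_fin_two]
        constructor
        · intro h
          have : a * (M 0 0 + M 1 1) = 0 := by linear_combination h
          rcases mul_eq_zero.mp this with h' | h'
          · exact absurd h' ha0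
          · exact h'
        · intro h
          linear_combination a * h
      · -- b = c = 0, a ≠ d
        exfalso
        by_cases ha : a = 0
        · have hd : d ≠ 0 := fun h => had (h ▸ ha)
          refine key2 hS u 1 (u+1) 0 ?_ one_ne_zero
            (show u + 1 ≠ 0 from fun h => hu1 (by linear_combination h - htwo))
            (show (1:F) ≠ u + 1 from fun h => hu0 (by linear_combination -h))
            (show ((1:F) - u) * (1 - 0) - 1 * (u+1) = 0 by linear_combination (-u) * htwo)
            (show ((u:F) + 1 - u) * (u + 1 - 0) - 1 * (u+1) = 0 by ring)
          rw [hmem, hfval, ha, hb, hc]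
          ring
        · by_cases hd : d = 0
          · refine key2 hS 0 1 (u+1) u ?_ one_ne_zero
              (show u + 1 ≠ 0 from fun h => hu1 (by linear_combination h - htwo))
              (show (1:F) ≠ u + 1 from fun h => hu0 (by linear_combination -h))
              (show ((1:F) - 0) * (1 - u) - 1 * (u+1) = 0 by linear_combination (-u) * htwo)
              (show ((u:F) + 1 - 0) * (u + 1 - u) - 1 * (u+1) = 0 by ring)
            rw [hmem, hfval, hd, hb, hc]
            ring
          · refine key2 hS d 0 0 a ?_ hd ha (Ne.symm had)
              (show (d - d) * (d - a) - 0 * 0 = 0 by ring)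
              (show (a - d) * (a - a) - 0 * 0 = 0 by ring)
            rw [hmem, hfval, hb, hc]
            linear_combination a * d * htwo
    · -- c ≠ 0
      exfalso
      refine key2 hS 1 0 (c⁻¹ * (a + d * u)) u ?_ one_ne_zero hu0 (Ne.symm hu1)
        (show ((1:F) - 1) * (1 - u) - 0 * (c⁻¹ * (a + d * u)) = 0 by ring)
        (show (u - 1) * (u - u) - 0 * (c⁻¹ * (a + d * u)) = 0 by ring)
      rw [hmem, hfval, hb]
      field_simp
      linear_combination (a + d * u) * htwo
  · -- b ≠ 0
    exfalso
    refine key2 hS 1 (b⁻¹ * (a + d * u)) 0 u ?_ one_ne_zero hu0 (Ne.symm hu1)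
      (show ((1:F) - 1) * (1 - u) - (b⁻¹ * (a + d * u)) * 0 = 0 by ring)
      (show (u - 1) * (u - u) - (b⁻¹ * (a + d * u)) * 0 = 0 by ring)
    rw [hmem, hfval]
    field_simp
    linear_combination (a + d * u) * htwo
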